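/- Let W be a finite group acting ℤ-linearly on a free abelian group Λ of finite rank with Λ^W = 0, and fix χ ∈ Λ. Then 2·φ^{(2)}(ρ(χ)) = Σ_{λ ∈ W(χ)} λ² in S²(Λ), and this element Σ_{λ∈W(χ)} λ² is W-invariant, i.e. Σ_{λ∈W(χ)} λ² ∈ S²(Λ)^W. -/
import Mathlib

open MvPolynomial

/-- Identify `λ ∈ Λ = Fin n →₀ ℤ` with the linear polynomial `Σⱼ λⱼ Xⱼ ∈ S¹(Λ)`. -/
noncomputable def weightPoly (n : ℕ) (v : Fin n →₀ ℤ) : MvPolynomial (Fin n) ℤ :=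
  ∑ j, v j • MvPolynomial.X j

noncomputable def weightPolyHom (n : ℕ) : (Fin n →₀ ℤ) →+ MvPolynomial (Fin n) ℤ where
  toFun := weightPoly n
  map_zero' := by simp [weightPoly]
  map_add' a b := by simp [weightPoly, add_smul, Finset.sum_add_distrib]

lemma single_decomp (n : ℕ) (v : Fin n →₀ ℤ) :
    v = ∑ j, v j • Finsupp.single j (1 : ℤ) := by
  ext k
  rw [Finsupp.finset_sum_apply]
  simp [Finsupp.single_apply]

theorem phi_two_of_orbit (n : ℕ) (W : Type*) [Group W] [Finite W]
    [DistribMulAction W (Fin n →₀ ℤ)]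
    (hessential : ∀ v : Fin n →₀ ℤ, (∀ g : W, g • v = v) → v = 0)
    (χ : Fin n →₀ ℤ) (O : Finset (Fin n →₀ ℤ))
    (hO : (O : Set (Fin n →₀ ℤ)) = MulAction.orbit W χ) :
    (∑ v ∈ O, ((weightPoly n v) ^ 2 + ∑ j, v j • (MvPolynomial.X j : MvPolynomial (Fin n) ℤ) ^ 2)
        = ∑ v ∈ O, (weightPoly n v) ^ 2) ∧
    (∀ g : W,
      MvPolynomial.aeval (fun j => weightPoly n (g • Finsupp.single j 1))
          (∑ v ∈ O, (weightPoly n v) ^ 2)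
        = ∑ v ∈ O, (weightPoly n v) ^ 2) := by
  classical
  have hmem : ∀ v, v ∈ O ↔ v ∈ MulAction.orbit W χ := by
    intro v
    constructor
    · intro h; rw [← hO]; exact h
    · intro h; have : v ∈ (O : Set _) := hO ▸ h; exact this
  have hsmul_mem : ∀ (g : W) (v : Fin n →₀ ℤ), v ∈ O → g • v ∈ O := by
    intro g v hv
    rw [hmem] at hv ⊢
    obtain ⟨h, rfl⟩ := hv
    have := MulAction.mem_orbit χ (g * h)
    rwa [mul_smul] at this
  have hmem_iff : ∀ (g : W) (v : Fin n →₀ ℤ), v ∈ O ↔ g • v ∈ O := by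
    intro g v
    constructor
    · exact hsmul_mem g v
    · intro h
      have := hsmul_mem g⁻¹ _ h
      rwa [inv_smul_smul] at this
  -- sum over orbit is W-invariant hence zero
  have hsum0 : (∑ v ∈ O, v) = 0 := by
    apply hessential
    intro g
    rw [Finset.smul_sum]
    exact Finset.sum_bijective (g • ·) (MulAction.bijective g)
      (fun v => hmem_iff g v) (fun v _ => rfl)
  have hcoord : ∀ j, (∑ v ∈ O, v j) = 0 := by
    intro j
    have := congrArg (fun f : Fin n →₀ ℤ => f j) hsum0
    simpa [Finsupp.finset_sum_apply] using this
  constructor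
  · rw [Finset.sum_add_distrib]
    have : (∑ v ∈ O, ∑ j, v j • (MvPolynomial.X j : MvPolynomial (Fin n) ℤ) ^ 2) = 0 := by
      rw [Finset.sum_comm]
      refine Finset.sum_eq_zero fun j _ => ?_
      rw [← Finset.sum_smul, hcoord j, zero_smul]
    rw [this, add_zero]
  · intro g
    have key : ∀ v : Fin n →₀ ℤ,
        MvPolynomial.aeval (fun j => weightPoly n (g • Finsupp.single j 1))
          (weightPoly n v) = weightPoly n (g • v) := by
      intro v
      have h1 : MvPolynomial.aeval (fun j => weightPoly n (g • Finsupp.single j 1))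
          (weightPoly n v) = ∑ j, v j • weightPoly n (g • Finsupp.single j 1) := by
        simp [weightPoly, map_sum, map_zsmul]
      have h2 : g • v = ∑ j, v j • (g • Finsupp.single j (1 : ℤ)) := by
        conv_lhs => rw [single_decomp n v]
        rw [Finset.smul_sum]
        refine Finset.sum_congr rfl fun j _ => ?_
        exact (DistribMulAction.toAddMonoidHom (Fin n →₀ ℤ) g).map_zsmul _ _
      rw [h1, h2]
      show ∑ j, v j • weightPolyHom n (g • Finsupp.single j 1)
        = weightPolyHom n (∑ j, v j • (g • Finsupp.single j (1 : ℤ)))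
      rw [map_sum (weightPolyHom n)]
      refine Finset.sum_congr rfl fun j _ => ?_
      exact ((weightPolyHom n).map_zsmul _ _).symm
    rw [map_sum]
    simp_rw [map_pow, key]
    exact Finset.sum_bijective (g • ·) (MulAction.bijective g)
      (fun v => hmem_iff g v) (fun v _ => rfl)
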